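/- Let V₁ and V₂ be finite-dimensional vector spaces over the finite field F_q. Suppose C₁ = {M₁,…,M_m} and C₂ = {N₁,…,N_n} are irredundant covers of the additive groups of V₁ and V₂ by proper subgroups, and let a ∈ V₁ \ M₁ and b ∈ V₂ \ N₁. Then C = {(M₁ × N₁) + ⟨(a,b)⟩, M_i × V₂ (i = 2,…,m), V₁ × N_j (j = 2,…,n)} is an irredundant (m+n−1)-cover of V₁ × V₂ whose intersection is (⋂ M_i) × (⋂ N_j). -/

import Mathlib

section helpers
variable {F V : Type*} [Field F] [Fintype F] [AddCommGroup V] [Module F V]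

lemma aux_char_zsmul (y : V) : ((ringChar F : ℤ)) • y = 0 := by
  rw [← Int.cast_smul_eq_zsmul F]
  have : ((ringChar F : ℤ) : F) = 0 := by
    push_cast
    exact CharP.cast_eq_zero F (ringChar F)
  rw [this, zero_smul]

lemma aux_zsmul_eq_zero {k : ℤ} (h : (ringChar F : ℤ) ∣ k) (y : V) : k • y = 0 := by
  obtain ⟨t, rfl⟩ := h
  rw [mul_smul, aux_char_zsmul]

lemma aux_dvd_of_zsmul_mem (H : AddSubgroup V) {x : V} (hx : x ∉ H) {k : ℤ}
    (hk : k • x ∈ H) : (ringChar F : ℤ) ∣ k := by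
  by_contra h
  have hp : (ringChar F).Prime := CharP.char_is_prime F (ringChar F)
  have hnd : ¬ (ringChar F ∣ k.natAbs) := by
    intro hd
    exact h (Int.dvd_natAbs.mp (Int.natCast_dvd_natCast.mpr hd))
  have hcop : IsCoprime ((ringChar F : ℤ)) k := by
    rw [Int.isCoprime_iff_gcd_eq_one]
    exact (hp.coprime_iff_not_dvd.mpr hnd)
  obtain ⟨u, v, huv⟩ := hcop
  have : x ∈ H := by
    have hx1 : (u * (ringChar F : ℤ) + v * k) • x = x := by rw [huv, one_smul]
    rw [← hx1, add_smul, mul_smul, mul_smul, aux_char_zsmul, smul_zero, zero_add]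
    exact AddSubgroup.zsmul_mem H hk v
  exact hx this

lemma aux_exists_uncovered {m : ℕ} (M : Fin (m + 1) → AddSubgroup V)
    (hirr : ∀ s : Finset (Fin (m + 1)), s ≠ Finset.univ → ¬ (∀ v : V, ∃ i ∈ s, v ∈ M i))
    (i₀ : Fin (m + 1)) : ∃ v, ∀ i, i ≠ i₀ → v ∉ M i := by
  have hne : Finset.univ.erase i₀ ≠ Finset.univ := by
    intro h
    have hm := Finset.mem_univ i₀
    rw [← h] at hm
    exact Finset.notMem_erase i₀ _ hm
  have := hirr (Finset.univ.erase i₀) hne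
  push_neg at this
  obtain ⟨v, hv⟩ := this
  exact ⟨v, fun i hi => hv i (by simp [hi])⟩

lemma aux_mem_zero {m : ℕ} (M : Fin (m + 1) → AddSubgroup V)
    (hcov : ∀ v : V, ∃ i, v ∈ M i)
    (hirr : ∀ s : Finset (Fin (m + 1)), s ≠ Finset.univ → ¬ (∀ v : V, ∃ i ∈ s, v ∈ M i))
    {x : V} (hx : ∀ i, i ≠ 0 → x ∈ M i) : x ∈ M 0 := by
  obtain ⟨u, hu⟩ := aux_exists_uncovered M hirr 0
  have hu0 : u ∈ M 0 := by
    obtain ⟨i, hi⟩ := hcov u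
    rcases eq_or_ne i 0 with rfl | hne
    · exact hi
    · exact absurd hi (hu i hne)
  obtain ⟨j, hj⟩ := hcov (u + x)
  rcases eq_or_ne j 0 with rfl | hne
  · have : x = (u + x) - u := by abel
    rw [this]; exact AddSubgroup.sub_mem _ hj hu0
  · exfalso
    apply hu j hne
    have : u = (u + x) - x := by abel
    rw [this]; exact AddSubgroup.sub_mem _ hj (hx j hne)

end helpers

theorem stmt10 {F V₁ V₂ : Type*} [Field F] [Fintype F]
    [AddCommGroup V₁] [Module F V₁] [AddCommGroup V₂] [Module F V₂]
    [FiniteDimensional F V₁] [FiniteDimensional F V₂] {m n : ℕ}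
    (M : Fin (m + 1) → AddSubgroup V₁) (N : Fin (n + 1) → AddSubgroup V₂)
    (hMinj : Function.Injective M) (hNinj : Function.Injective N)
    (hMproper : ∀ i, M i ≠ ⊤) (hNproper : ∀ j, N j ≠ ⊤)
    (hMcover : ∀ v : V₁, ∃ i, v ∈ M i) (hNcover : ∀ v : V₂, ∃ j, v ∈ N j)
    (hMirr : ∀ s : Finset (Fin (m + 1)), s ≠ Finset.univ → ¬ (∀ v : V₁, ∃ i ∈ s, v ∈ M i))
    (hNirr : ∀ s : Finset (Fin (n + 1)), s ≠ Finset.univ → ¬ (∀ v : V₂, ∃ j ∈ s, v ∈ N j))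
    (a : V₁) (b : V₂) (ha : a ∉ M 0) (hb : b ∉ N 0)
    (C : Set (AddSubgroup (V₁ × V₂)))
    (hC : C = insert ((M 0).prod (N 0) ⊔ AddSubgroup.zmultiples ((a, b) : V₁ × V₂))
      ({S | ∃ i, i ≠ 0 ∧ S = (M i).prod ⊤} ∪ {S | ∃ j, j ≠ 0 ∧ S = (⊤ : AddSubgroup V₁).prod (N j)})) :
    (∀ v : V₁ × V₂, ∃ S ∈ C, v ∈ S) ∧ (∀ S ∈ C, S ≠ ⊤) ∧
    C.ncard = m + n + 1 ∧
    (∀ D : Set (AddSubgroup (V₁ × V₂)), D ⊂ C → ¬ (∀ v : V₁ × V₂, ∃ S ∈ D, v ∈ S)) ∧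
    sInf C = (⨅ i, M i).prod (⨅ j, N j) := by
  subst hC
  set S₀ : AddSubgroup (V₁ × V₂) :=
    (M 0).prod (N 0) ⊔ AddSubgroup.zmultiples ((a, b) : V₁ × V₂) with hS₀
  set A : Set (AddSubgroup (V₁ × V₂)) := {S | ∃ i, i ≠ 0 ∧ S = (M i).prod ⊤} with hA
  set B : Set (AddSubgroup (V₁ × V₂)) :=
    {S | ∃ j, j ≠ 0 ∧ S = (⊤ : AddSubgroup V₁).prod (N j)} with hB
  -- structure of membership in S₀
  have hmemS₀ : ∀ x y, (x, y) ∈ S₀ →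
      ∃ k : ℤ, x - k • a ∈ M 0 ∧ y - k • b ∈ N 0 := by
    intro x y h
    rw [hS₀, AddSubgroup.mem_sup] at h
    obtain ⟨u, hu, z, hz, huz⟩ := h
    rw [AddSubgroup.mem_zmultiples_iff] at hz
    obtain ⟨k, rfl⟩ := hz
    rw [AddSubgroup.mem_prod] at hu
    refine ⟨k, ?_, ?_⟩
    · have : x - k • a = u.1 := by
        have := congrArg Prod.fst huz
        simp at this
        rw [← this]; abel
      rw [this]; exact hu.1
    · have : y - k • b = u.2 := by
        have := congrArg Prod.snd huz
        simp at this
        rw [← this]; abel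
      rw [this]; exact hu.2
  have key₁ : ∀ x y, (x, y) ∈ S₀ → y ∈ N 0 → x ∈ M 0 := by
    intro x y h hy
    obtain ⟨k, hkx, hky⟩ := hmemS₀ x y h
    have hkb : k • b ∈ N 0 := by
      have : k • b = y - (y - k • b) := by abel
      rw [this]; exact AddSubgroup.sub_mem _ hy hky
    have hdvd := aux_dvd_of_zsmul_mem (F := F) (N 0) hb hkb
    have hza : k • a = 0 := aux_zsmul_eq_zero (F := F) hdvd a
    rw [hza, sub_zero] at hkx
    exact hkx
  have key₂ : ∀ x y, (x, y) ∈ S₀ → x ∈ M 0 → y ∈ N 0 := by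
    intro x y h hx
    obtain ⟨k, hkx, hky⟩ := hmemS₀ x y h
    have hka : k • a ∈ M 0 := by
      have : k • a = x - (x - k • a) := by abel
      rw [this]; exact AddSubgroup.sub_mem _ hx hkx
    have hdvd := aux_dvd_of_zsmul_mem (F := F) (M 0) ha hka
    have hzb : k • b = 0 := aux_zsmul_eq_zero (F := F) hdvd b
    rw [hzb, sub_zero] at hky
    exact hky
  -- prod injectivity helpers
  have hfst : ∀ (H K : AddSubgroup V₁),
      H.prod (⊤ : AddSubgroup V₂) = K.prod ⊤ → H = K := by
    intro H K h
    ext x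
    constructor <;> intro hx
    · have : ((x, 0) : V₁ × V₂) ∈ K.prod ⊤ := h ▸ AddSubgroup.mem_prod.mpr ⟨hx, trivial⟩
      exact (AddSubgroup.mem_prod.mp this).1
    · have : ((x, 0) : V₁ × V₂) ∈ H.prod ⊤ := h ▸ AddSubgroup.mem_prod.mpr ⟨hx, trivial⟩
      exact (AddSubgroup.mem_prod.mp this).1
  have hsnd : ∀ (H K : AddSubgroup V₂),
      (⊤ : AddSubgroup V₁).prod H = (⊤ : AddSubgroup V₁).prod K → H = K := by
    intro H K h
    ext y
    constructor <;> intro hy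
    · have : ((0, y) : V₁ × V₂) ∈ (⊤ : AddSubgroup V₁).prod K :=
        h ▸ AddSubgroup.mem_prod.mpr ⟨trivial, hy⟩
      exact (AddSubgroup.mem_prod.mp this).2
    · have : ((0, y) : V₁ × V₂) ∈ (⊤ : AddSubgroup V₁).prod H :=
        h ▸ AddSubgroup.mem_prod.mpr ⟨trivial, hy⟩
      exact (AddSubgroup.mem_prod.mp this).2
  have hABne : ∀ (i : Fin (m + 1)) (j : Fin (n + 1)),
      (M i).prod (⊤ : AddSubgroup V₂) ≠ (⊤ : AddSubgroup V₁).prod (N j) := by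
    intro i j h
    apply hMproper i
    rw [AddSubgroup.eq_top_iff']
    intro x
    have : ((x, 0) : V₁ × V₂) ∈ (⊤ : AddSubgroup V₁).prod (N j) :=
      AddSubgroup.mem_prod.mpr ⟨trivial, AddSubgroup.zero_mem _⟩
    rw [← h] at this
    exact (AddSubgroup.mem_prod.mp this).1
  -- witnesses that S₀ ∉ A ∪ B
  obtain ⟨y₀, hy₀⟩ : ∃ y₀, y₀ ∉ N 0 := by
    by_contra h
    push_neg at h
    exact hNproper 0 ((AddSubgroup.eq_top_iff' _).mpr h)
  have hS₀A : ∀ i : Fin (m + 1), S₀ ≠ (M i).prod ⊤ := by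
    intro i h
    have : ((0, y₀) : V₁ × V₂) ∈ S₀ := by
      rw [h]; exact AddSubgroup.mem_prod.mpr ⟨AddSubgroup.zero_mem _, trivial⟩
    exact hy₀ (key₂ 0 y₀ this (AddSubgroup.zero_mem _))
  have hS₀B : ∀ j : Fin (n + 1), S₀ ≠ (⊤ : AddSubgroup V₁).prod (N j) := by
    intro j h
    have : ((a, 0) : V₁ × V₂) ∈ S₀ := by
      rw [h]; exact AddSubgroup.mem_prod.mpr ⟨trivial, AddSubgroup.zero_mem _⟩
    exact ha (key₁ a 0 this (AddSubgroup.zero_mem _))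
  refine ⟨?_, ?_, ?_, ?_, ?_⟩
  -- 1. cover
  · rintro ⟨x, y⟩
    by_cases h1 : ∃ i, i ≠ 0 ∧ x ∈ M i
    · obtain ⟨i, hi, hx⟩ := h1
      exact ⟨(M i).prod ⊤, Set.mem_insert_of_mem _ (Or.inl ⟨i, hi, rfl⟩),
        AddSubgroup.mem_prod.mpr ⟨hx, trivial⟩⟩
    by_cases h2 : ∃ j, j ≠ 0 ∧ y ∈ N j
    · obtain ⟨j, hj, hy⟩ := h2
      exact ⟨(⊤ : AddSubgroup V₁).prod (N j), Set.mem_insert_of_mem _ (Or.inr ⟨j, hj, rfl⟩),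
        AddSubgroup.mem_prod.mpr ⟨trivial, hy⟩⟩
    push_neg at h1 h2
    have hx : x ∈ M 0 := by
      obtain ⟨i, hi⟩ := hMcover x
      rcases eq_or_ne i 0 with rfl | hne
      · exact hi
      · exact absurd hi (h1 i hne)
    have hy : y ∈ N 0 := by
      obtain ⟨j, hj⟩ := hNcover y
      rcases eq_or_ne j 0 with rfl | hne
      · exact hj
      · exact absurd hj (h2 j hne)
    exact ⟨S₀, Set.mem_insert _ _,
      SetLike.le_def.mp le_sup_left (AddSubgroup.mem_prod.mpr ⟨hx, hy⟩)⟩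
  -- 2. proper
  · rintro S hS
    rcases hS with rfl | hS | hS
    · intro h
      have : ((a, 0) : V₁ × V₂) ∈ S₀ := h ▸ AddSubgroup.mem_top _
      exact ha (key₁ a 0 this (AddSubgroup.zero_mem _))
    · obtain ⟨i, hi, rfl⟩ := hS
      intro h
      apply hMproper i
      rw [AddSubgroup.eq_top_iff']
      intro x
      have : ((x, 0) : V₁ × V₂) ∈ (M i).prod ⊤ := h ▸ AddSubgroup.mem_top _
      exact (AddSubgroup.mem_prod.mp this).1
    · obtain ⟨j, hj, rfl⟩ := hS
      intro h
      apply hNproper j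
      rw [AddSubgroup.eq_top_iff']
      intro y
      have : ((0, y) : V₁ × V₂) ∈ (⊤ : AddSubgroup V₁).prod (N j) := h ▸ AddSubgroup.mem_top _
      exact (AddSubgroup.mem_prod.mp this).2
  -- 3. cardinality
  · have hAeq : A = (fun i => (M i).prod (⊤ : AddSubgroup V₂)) '' {i | i ≠ 0} := by
      ext S
      constructor
      · rintro ⟨i, hi, rfl⟩; exact ⟨i, hi, rfl⟩
      · rintro ⟨i, hi, rfl⟩; exact ⟨i, hi, rfl⟩
    have hBeq : B = (fun j => (⊤ : AddSubgroup V₁).prod (N j)) '' {j | j ≠ 0} := by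
      ext S
      constructor
      · rintro ⟨j, hj, rfl⟩; exact ⟨j, hj, rfl⟩
      · rintro ⟨j, hj, rfl⟩; exact ⟨j, hj, rfl⟩
    have hAfin : A.Finite := hAeq ▸ (Set.toFinite _).image _
    have hBfin : B.Finite := hBeq ▸ (Set.toFinite _).image _
    have hcard : ∀ (k : ℕ), ({i : Fin (k + 1) | i ≠ 0}).ncard = k := by
      intro k
      have : {i : Fin (k + 1) | i ≠ 0} = ↑(Finset.univ.erase (0 : Fin (k + 1))) := by
        ext i; simp
      rw [this, Set.ncard_coe_finset, Finset.card_erase_of_mem (Finset.mem_univ _),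
        Finset.card_univ, Fintype.card_fin]
      simp
    have hAcard : A.ncard = m := by
      rw [hAeq, Set.ncard_image_of_injective _ (fun i j h => hMinj (hfst _ _ h)), hcard]
    have hBcard : B.ncard = n := by
      rw [hBeq, Set.ncard_image_of_injective _ (fun i j h => hNinj (hsnd _ _ h)), hcard]
    have hS₀notin : S₀ ∉ A ∪ B := by
      rintro (⟨i, hi, h⟩ | ⟨j, hj, h⟩)
      · exact hS₀A i h
      · exact hS₀B j h
    have hdisj : Disjoint A B := by
      rw [Set.disjoint_left]
      rintro S ⟨i, hi, rfl⟩ ⟨j, hj, h⟩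
      exact hABne i j h
    rw [Set.ncard_insert_of_notMem hS₀notin (hAfin.union hBfin),
      Set.ncard_union_eq hdisj hAfin hBfin, hAcard, hBcard]
  -- 4. irredundancy
  · rintro D hD hcov
    obtain ⟨hsub, hne⟩ := hD
    obtain ⟨S, hSC, hSD⟩ := Set.not_subset.mp hne
    have hinC : ∀ T ∈ D, T = S₀ ∨ (∃ i, i ≠ 0 ∧ T = (M i).prod ⊤) ∨
        (∃ j, j ≠ 0 ∧ T = (⊤ : AddSubgroup V₁).prod (N j)) := by
      intro T hT
      rcases hsub hT with h | h | h
      · exact Or.inl h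
      · exact Or.inr (Or.inl h)
      · exact Or.inr (Or.inr h)
    rcases hSC with rfl | ⟨i₀, hi₀, rfl⟩ | ⟨j₀, hj₀, rfl⟩
    · -- S₀ missing
      obtain ⟨v, hv⟩ := aux_exists_uncovered M hMirr 0
      obtain ⟨w, hw⟩ := aux_exists_uncovered N hNirr 0
      obtain ⟨T, hTD, hvwT⟩ := hcov (v, w)
      rcases hinC T hTD with rfl | ⟨i, hi, rfl⟩ | ⟨j, hj, rfl⟩
      · exact hSD hTD
      · exact hv i hi (AddSubgroup.mem_prod.mp hvwT).1
      · exact hw j hj (AddSubgroup.mem_prod.mp hvwT).2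
    · -- M i₀ × ⊤ missing
      obtain ⟨v, hv⟩ := aux_exists_uncovered M hMirr i₀
      obtain ⟨w, hw⟩ := aux_exists_uncovered N hNirr 0
      have hw0 : w ∈ N 0 := by
        obtain ⟨j, hj⟩ := hNcover w
        rcases eq_or_ne j 0 with rfl | hne
        · exact hj
        · exact absurd hj (hw j hne)
      obtain ⟨T, hTD, hvwT⟩ := hcov (v, w)
      rcases hinC T hTD with rfl | ⟨i, hi, rfl⟩ | ⟨j, hj, rfl⟩
      · exact hv 0 (Ne.symm hi₀) (key₁ v w hvwT hw0)
      · rcases eq_or_ne i i₀ with rfl | hne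
        · exact hSD hTD
        · exact hv i hne (AddSubgroup.mem_prod.mp hvwT).1
      · exact hw j hj (AddSubgroup.mem_prod.mp hvwT).2
    · -- ⊤ × N j₀ missing
      obtain ⟨w, hw⟩ := aux_exists_uncovered N hNirr j₀
      obtain ⟨v, hv⟩ := aux_exists_uncovered M hMirr 0
      have hv0 : v ∈ M 0 := by
        obtain ⟨i, hi⟩ := hMcover v
        rcases eq_or_ne i 0 with rfl | hne
        · exact hi
        · exact absurd hi (hv i hne)
      obtain ⟨T, hTD, hvwT⟩ := hcov (v, w)
      rcases hinC T hTD with rfl | ⟨i, hi, rfl⟩ | ⟨j, hj, rfl⟩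
      · exact hw 0 (Ne.symm hj₀) (key₂ v w hvwT hv0)
      · exact hv i hi (AddSubgroup.mem_prod.mp hvwT).1
      · rcases eq_or_ne j j₀ with rfl | hne
        · exact hSD hTD
        · exact hw j hne (AddSubgroup.mem_prod.mp hvwT).2
  -- 5. sInf
  · ext ⟨x, y⟩
    rw [AddSubgroup.mem_sInf, AddSubgroup.mem_prod]
    simp only [AddSubgroup.mem_iInf]
    constructor
    · intro h
      have hx : ∀ i, i ≠ 0 → x ∈ M i := by
        intro i hi
        have := h ((M i).prod ⊤) (Set.mem_insert_of_mem _ (Or.inl ⟨i, hi, rfl⟩))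
        exact (AddSubgroup.mem_prod.mp this).1
      have hy : ∀ j, j ≠ 0 → y ∈ N j := by
        intro j hj
        have := h ((⊤ : AddSubgroup V₁).prod (N j)) (Set.mem_insert_of_mem _ (Or.inr ⟨j, hj, rfl⟩))
        exact (AddSubgroup.mem_prod.mp this).2
      have hx0 : x ∈ M 0 := aux_mem_zero M hMcover hMirr hx
      have hy0 : y ∈ N 0 := aux_mem_zero N hNcover hNirr hy
      constructor
      · intro i
        rcases eq_or_ne i 0 with rfl | hne
        · exact hx0
        · exact hx i hne
      · intro j
        rcases eq_or_ne j 0 with rfl | hne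
        · exact hy0
        · exact hy j hne
    · rintro ⟨hx, hy⟩ T hT
      rcases hT with rfl | ⟨i, hi, rfl⟩ | ⟨j, hj, rfl⟩
      · exact SetLike.le_def.mp le_sup_left (AddSubgroup.mem_prod.mpr ⟨hx 0, hy 0⟩)
      · exact AddSubgroup.mem_prod.mpr ⟨hx i, trivial⟩
      · exact AddSubgroup.mem_prod.mpr ⟨trivial, hy j⟩
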